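/- The theory of posets is convex with respect to {≤, ≈}: if Γ is a conjunction of ground atoms over {≤, ≈} with constants, and Γ entails a disjunction R₁(s₁,t₁) ∨ ... ∨ Rₘ(sₘ,tₘ) of atoms (each Rᵢ ∈ {≤, ≈}) in all posets, then Γ entails Rⱼ(sⱼ,tⱼ) for some single j. -/
import Mathlib


/-- The two relation symbols of the theory of posets: `≤` and `≈`. -/
inductive PRel : Type
  | le : PRel
  | eq : PRel

/-- A ground atom `lhs R rhs` over `{≤, ≈}` with constants from `C`. -/
structure PAtom (C : Type) : Type where
  rel : PRel
  lhs : C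
  rhs : C

/-- Truth of a ground atom in a poset `α` under an interpretation `v` of the constants. -/
def PAtom.holds {C α : Type} [PartialOrder α] (v : C → α) (a : PAtom C) : Prop :=
  match a.rel with
  | .le => v a.lhs ≤ v a.rhs
  | .eq => v a.lhs = v a.rhs

/-- One-step relation generated by `Γ`. -/
def PStep {C : Type} (Γ : List (PAtom C)) (s t : C) : Prop :=
  ∃ a ∈ Γ, (a.rel = PRel.le ∧ a.lhs = s ∧ a.rhs = t) ∨
    (a.rel = PRel.eq ∧ ((a.lhs = s ∧ a.rhs = t) ∨ (a.lhs = t ∧ a.rhs = s)))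

/-- The preorder generated by `Γ`. -/
def PGen {C : Type} (Γ : List (PAtom C)) : C → C → Prop :=
  Relation.ReflTransGen (PStep Γ)

lemma PGen_mono {C α : Type} [PartialOrder α] {Γ : List (PAtom C)} (v : C → α)
    (hv : ∀ g ∈ Γ, g.holds v) {s t : C} (h : PGen Γ s t) : v s ≤ v t := by
  induction h with
  | refl => exact le_refl _
  | tail _ hst ih =>
    obtain ⟨a, ha, hcase⟩ := hst
    have hA := hv a ha
    rcases hcase with ⟨hr, h1, h2⟩ | ⟨hr, hc⟩
    · subst h1; subst h2; simp [PAtom.holds, hr] at hA; exact ih.trans hA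
    · rcases hc with ⟨h1, h2⟩ | ⟨h1, h2⟩ <;> subst h1 <;> subst h2 <;>
        simp [PAtom.holds, hr] at hA
      · exact ih.trans hA.le
      · exact ih.trans hA.ge

/-- Carrier of the canonical model. -/
def PModel (C : Type) (Γ : List (PAtom C)) := C

instance {C : Type} {Γ : List (PAtom C)} : Preorder (PModel C Γ) where
  le := PGen Γ
  le_refl _ := Relation.ReflTransGen.refl
  le_trans _ _ _ := Relation.ReflTransGen.trans

/-- The theory of posets is convex with respect to `{≤, ≈}`: if a conjunction `Γ` of
ground atoms entails a disjunction of atoms `D` in all posets, then `Γ` already entails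
a single disjunct. -/
theorem poset_convex {C : Type} (Γ D : List (PAtom C))
    (hent : ∀ (α : Type) [PartialOrder α] (v : C → α),
      (∀ g ∈ Γ, g.holds v) → ∃ d ∈ D, d.holds v) :
    ∃ d ∈ D, ∀ (α : Type) [PartialOrder α] (v : C → α),
      (∀ g ∈ Γ, g.holds v) → d.holds v := by
  let v₀ : C → Antisymmetrization (PModel C Γ) (· ≤ ·) :=
    fun c => toAntisymmetrization (· ≤ ·) (c : PModel C Γ)
  have key : ∀ s t : C, v₀ s ≤ v₀ t ↔ PGen Γ s t := fun s t =>
    toAntisymmetrization_le_toAntisymmetrization_iff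
  have hΓ : ∀ g ∈ Γ, g.holds v₀ := by
    intro g hg
    cases hrel : g.rel with
    | le =>
      simp only [PAtom.holds, hrel]
      exact (key _ _).2 (Relation.ReflTransGen.single ⟨g, hg, Or.inl ⟨hrel, rfl, rfl⟩⟩)
    | eq =>
      simp only [PAtom.holds, hrel]
      exact le_antisymm
        ((key _ _).2 (Relation.ReflTransGen.single ⟨g, hg, Or.inr ⟨hrel, Or.inl ⟨rfl, rfl⟩⟩⟩))
        ((key _ _).2 (Relation.ReflTransGen.single ⟨g, hg, Or.inr ⟨hrel, Or.inr ⟨rfl, rfl⟩⟩⟩))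
  obtain ⟨d, hd, hdh⟩ := hent _ v₀ hΓ
  refine ⟨d, hd, ?_⟩
  intro α _ v hv
  cases hrel : d.rel with
  | le =>
    simp only [PAtom.holds, hrel] at hdh ⊢
    exact PGen_mono v hv ((key _ _).1 hdh)
  | eq =>
    simp only [PAtom.holds, hrel] at hdh ⊢
    exact le_antisymm (PGen_mono v hv ((key _ _).1 hdh.le))
      (PGen_mono v hv ((key _ _).1 hdh.ge))
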